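/- Let M be a positively ordered monoid and let a, b ∈ M. Then the following are equivalent: (1) there exists k ∈ ℕ with (k+1)·a ≤ k·b; (2) there exists k₀ ∈ ℕ such that (k+1)·a ≤ k·b for all k ≥ k₀; (3) for every n ≥ 1 there exists k ∈ ℕ with (k+n)·a ≤ k·b; (4) for every n ≥ 1 there exists k₀ ∈ ℕ such that (k+n)·a ≤ k·b for all k ≥ k₀; (5) there exists n ∈ ℕ with a ≤ n·b, and f(a) < 1 for every extended state f on M with f(b) = 1. -/

import Mathlib

open scoped ENNReal

namespace Stmt0Aux

variable {M : Type*} [AddCommMonoid M] [PartialOrder M] [IsOrderedAddMonoid M]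

/-- Telescoping, case `n ≥ n'` (written `n = n' + d`). -/
lemma tele_ge {s s' x : M} {n d : ℕ}
    (h : s + (n + d) • x ≤ s' + n • x) :
    ∀ K : ℕ, (K + 1) • s + ((K + 1) * d + n) • x ≤ (K + 1) • s' + n • x := by
  intro K
  induction K with
  | zero => simpa [add_comm d n] using h
  | succ K ih =>
      have e1 : (K + 1 + 1) • s + ((K + 1 + 1) * d + n) • x
          = (s + d • x) + ((K + 1) • s + ((K + 1) * d + n) • x) := by
        have hc : (K + 1 + 1) * d + n = d + ((K + 1) * d + n) := by ring
        rw [hc, add_nsmul x d, succ_nsmul' s (K + 1)]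
        abel
      have e2 : (s + d • x) + ((K + 1) • s' + n • x)
          = (K + 1) • s' + (s + (n + d) • x) := by
        rw [add_nsmul x n]
        abel
      have e3 : (K + 1) • s' + (s' + n • x) = (K + 1 + 1) • s' + n • x := by
        rw [succ_nsmul' s' (K + 1)]
        abel
      calc (K + 1 + 1) • s + ((K + 1 + 1) * d + n) • x
          = (s + d • x) + ((K + 1) • s + ((K + 1) * d + n) • x) := e1
        _ ≤ (s + d • x) + ((K + 1) • s' + n • x) := add_le_add le_rfl ih
        _ = (K + 1) • s' + (s + (n + d) • x) := e2
        _ ≤ (K + 1) • s' + (s' + n • x) := add_le_add le_rfl h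
        _ = (K + 1 + 1) • s' + n • x := e3

/-- Telescoping, case `n ≤ n'` (written `n' = n + d`). -/
lemma tele_le {s s' x : M} {n d : ℕ}
    (h : s + n • x ≤ s' + (n + d) • x) :
    ∀ K : ℕ, (K + 1) • s + n • x ≤ (K + 1) • s' + ((K + 1) * d + n) • x := by
  intro K
  induction K with
  | zero => simpa [add_comm d n] using h
  | succ K ih =>
      have e1 : (K + 1 + 1) • s + n • x = s + ((K + 1) • s + n • x) := by
        rw [succ_nsmul' s (K + 1)]; abel
      have e2 : s + ((K + 1) • s' + ((K + 1) * d + n) • x)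
          = (K + 1) • s' + ((K + 1) * d) • x + (s + n • x) := by
        rw [add_nsmul x ((K + 1) * d)]
        abel
      have e3 : (K + 1) • s' + ((K + 1) * d) • x + (s' + (n + d) • x)
          = (K + 1 + 1) • s' + ((K + 1 + 1) * d + n) • x := by
        have hc : (K + 1 + 1) * d + n = (K + 1) * d + (n + d) := by ring
        rw [hc, add_nsmul x ((K + 1) * d), succ_nsmul' s' (K + 1)]
        abel
      calc (K + 1 + 1) • s + n • x = s + ((K + 1) • s + n • x) := e1
        _ ≤ s + ((K + 1) • s' + ((K + 1) * d + n) • x) := add_le_add le_rfl ih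
        _ = (K + 1) • s' + ((K + 1) * d) • x + (s + n • x) := e2
        _ ≤ (K + 1) • s' + ((K + 1) * d) • x + (s' + (n + d) • x) := add_le_add le_rfl h
        _ = (K + 1 + 1) • s' + ((K + 1 + 1) * d + n) • x := e3

/-- Archimedean helper. -/
lemma arch {c C : ℝ} (h : ∀ K : ℕ, ((K : ℝ) + 1) * c ≤ C) : c ≤ 0 := by
  by_contra hc
  push_neg at hc
  obtain ⟨K, hK⟩ := exists_nat_gt (C / c)
  have h1 : C / c < (K : ℝ) + 1 := hK.trans (by linarith)
  have h2 : C < ((K : ℝ) + 1) * c := by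
    rw [div_lt_iff₀ hc] at h1; linarith
  exact absurd (h K) (not_le.2 h2)

/-- A partial state: an additive, order-preserving, real-valued function defined on a
submonoid of elements dominated by multiples of `b`, normalized at `b`. -/
structure PS (M : Type*) [AddCommMonoid M] [PartialOrder M] [IsOrderedAddMonoid M] (b : M) where
  S : Set M
  zero_mem : (0 : M) ∈ S
  add_mem : ∀ {x y : M}, x ∈ S → y ∈ S → x + y ∈ S
  bdd : ∀ x ∈ S, ∃ n : ℕ, x ≤ n • b
  f : M → ℝ
  f_add : ∀ x ∈ S, ∀ y ∈ S, f (x + y) = f x + f y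
  f_mono : ∀ x ∈ S, ∀ y ∈ S, x ≤ y → f x ≤ f y
  b_mem : b ∈ S
  f_b : f b = 1

namespace PS

variable {b : M}

lemma f_zero (P : PS M b) : P.f 0 = 0 := by
  have := P.f_add 0 P.zero_mem 0 P.zero_mem
  simp only [add_zero] at this
  linarith

lemma nsmul_mem (P : PS M b) {x : M} (hx : x ∈ P.S) : ∀ n : ℕ, n • x ∈ P.S
  | 0 => by simpa using P.zero_mem
  | n + 1 => by
      rw [succ_nsmul]
      exact P.add_mem (P.nsmul_mem hx n) hx

lemma f_nsmul (P : PS M b) {x : M} (hx : x ∈ P.S) : ∀ n : ℕ, P.f (n • x) = n * P.f x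
  | 0 => by simpa using P.f_zero
  | n + 1 => by
      rw [succ_nsmul, P.f_add _ (P.nsmul_mem hx n) _ hx, P.f_nsmul hx n]
      push_cast; ring

lemma f_nonneg (P : PS M b) (h0 : ∀ y : M, 0 ≤ y) {x : M} (hx : x ∈ P.S) : 0 ≤ P.f x := by
  have := P.f_mono 0 P.zero_mem x hx (h0 x)
  rwa [P.f_zero] at this

instance : Preorder (PS M b) where
  le P Q := P.S ⊆ Q.S ∧ ∀ y ∈ P.S, Q.f y = P.f y
  le_refl P := ⟨subset_rfl, fun _ _ => rfl⟩
  le_trans P Q R hPQ hQR :=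
    ⟨hPQ.1.trans hQR.1, fun y hy => (hQR.2 y (hPQ.1 hy)).trans (hPQ.2 y hy)⟩

lemma le_def {P Q : PS M b} : P ≤ Q ↔ P.S ⊆ Q.S ∧ ∀ y ∈ P.S, Q.f y = P.f y := Iff.rfl

end PS

variable {b : M}

/-- The set of upper estimates for the value at `x`. -/
def T (P : PS M b) (x : M) : Set ℝ :=
  {r | ∃ p ∈ P.S, ∃ q ∈ P.S, ∃ m : ℕ, 1 ≤ m ∧ p + m • x ≤ q ∧ r = (P.f q - P.f p) / m}

lemma T_nonempty (P : PS M b) {x : M} {N : ℕ} (hN : x ≤ N • b) : (T P x).Nonempty :=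
  ⟨(P.f (N • b) - P.f 0) / 1, 0, P.zero_mem, N • b, P.nsmul_mem P.b_mem N, 1, le_rfl,
    by simpa using hN, by norm_num⟩

lemma T_lb (h0 : ∀ y : M, 0 ≤ y) (P : PS M b) (x : M) : ∀ r ∈ T P x, (0 : ℝ) ≤ r := by
  rintro r ⟨p, hp, q, hq, m, hm, hrel, rfl⟩
  have hpq : p ≤ q := (le_add_of_nonneg_right (h0 (m • x))).trans hrel
  have := P.f_mono p hp q hq hpq
  have hm' : (0 : ℝ) ≤ (m : ℝ) := Nat.cast_nonneg m
  exact div_nonneg (by linarith) hm'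

open Classical in
/-- The candidate extension of `P.f` to the monoid generated by `P.S` and `x`. -/
noncomputable def extFun (P : PS M b) (x : M) (t : ℝ) : M → ℝ := fun y =>
  if h : ∃ s ∈ P.S, ∃ n : ℕ, y = s + n • x then
    P.f h.choose + (h.choose_spec.2.choose : ℝ) * t
  else 0

lemma extFun_eq (P : PS M b) {x : M} {t : ℝ}
    (key : ∀ s ∈ P.S, ∀ s' ∈ P.S, ∀ n n' : ℕ, s + n • x ≤ s' + n' • x →
      P.f s + n * t ≤ P.f s' + n' * t)
    {s : M} (hs : s ∈ P.S) (n : ℕ) : extFun P x t (s + n • x) = P.f s + n * t := by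
  classical
  have hy : ∃ s' ∈ P.S, ∃ n' : ℕ, s + n • x = s' + n' • x := ⟨s, hs, n, rfl⟩
  rw [extFun, dif_pos hy]
  have hs₁ : hy.choose ∈ P.S := hy.choose_spec.1
  have he : s + n • x = hy.choose + hy.choose_spec.2.choose • x :=
    hy.choose_spec.2.choose_spec
  have h1 := key _ hs₁ s hs _ n (le_of_eq he.symm)
  have h2 := key s hs _ hs₁ n _ (le_of_eq he)
  linarith

/-- The one-step extension theorem for partial states. -/
lemma extend (h0 : ∀ y : M, 0 ≤ y) (P : PS M b) (x : M) {N : ℕ} (hN : x ≤ N • b) :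
    ∃ Q : PS M b, P ≤ Q ∧ x ∈ Q.S ∧ Q.f x = sInf (T P x) := by
  classical
  have hTne := T_nonempty P hN
  have hTbdd : BddBelow (T P x) := ⟨0, T_lb h0 P x⟩
  set t := sInf (T P x) with ht
  have ht0 : 0 ≤ t := le_csInf hTne (T_lb h0 P x)
  have hxN : ∀ n : ℕ, n • x ≤ (n * N) • b := by
    intro n
    calc n • x ≤ n • (N • b) := nsmul_le_nsmul_right hN n
      _ = (n * N) • b := (mul_nsmul' b n N).symm
  -- the case of equal coefficients
  have key0 : ∀ s ∈ P.S, ∀ s' ∈ P.S, ∀ n : ℕ, s + n • x ≤ s' + n • x → P.f s ≤ P.f s' := by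
    intro s hs s' hs' n hrel
    have htel := tele_ge (n := n) (d := 0) (by simpa using hrel)
    have harch : ∀ K : ℕ, ((K : ℝ) + 1) * (P.f s - P.f s') ≤ ((n * N : ℕ) : ℝ) := by
      intro K
      have h1 : (K + 1) • s ≤ (K + 1) • s' + (n * N) • b := by
        calc (K + 1) • s ≤ (K + 1) • s + n • x := le_add_of_nonneg_right (h0 _)
          _ ≤ (K + 1) • s' + n • x := by simpa using htel K
          _ ≤ (K + 1) • s' + (n * N) • b := add_le_add le_rfl (hxN n)
      have h2 := P.f_mono _ (P.nsmul_mem hs _) _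
        (P.add_mem (P.nsmul_mem hs' _) (P.nsmul_mem P.b_mem _)) h1
      rw [P.f_nsmul hs, P.f_add _ (P.nsmul_mem hs' _) _ (P.nsmul_mem P.b_mem _),
        P.f_nsmul hs', P.f_nsmul P.b_mem, P.f_b] at h2
      push_cast at h2 ⊢
      nlinarith [h2]
    have := arch harch
    linarith
  -- the main compatibility estimate
  have key : ∀ s ∈ P.S, ∀ s' ∈ P.S, ∀ n n' : ℕ, s + n • x ≤ s' + n' • x →
      P.f s + n * t ≤ P.f s' + n' * t := by
    intro s hs s' hs' n n' hrel
    rcases Nat.lt_trichotomy n n' with hlt | rfl | hlt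
    · -- n < n' : a lower-bound constraint
      obtain ⟨d, hd1, rfl⟩ : ∃ d, 1 ≤ d ∧ n' = n + d := ⟨n' - n, by omega, by omega⟩
      have hd0 : (0 : ℝ) < (d : ℝ) := by exact_mod_cast hd1
      suffices h : P.f s ≤ P.f s' + d * t by push_cast; linarith
      have hlb : ∀ r ∈ T P x, (P.f s - P.f s') / d ≤ r := by
        rintro r ⟨p, hp, q, hq, m, hm, hpq, rfl⟩
        have hm0 : (0 : ℝ) < (m : ℝ) := by exact_mod_cast hm
        have hfpq : P.f p ≤ P.f q :=
          P.f_mono p hp q hq ((le_add_of_nonneg_right (h0 (m • x))).trans hpq)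
        have htel := tele_le hrel
        have hineq : ∀ K : ℕ, ((K : ℝ) + 1) *
            ((m : ℝ) * (P.f s - P.f s') - (d : ℝ) * (P.f q - P.f p))
            ≤ (n : ℝ) * (P.f q - P.f p) := by
          intro K
          have hmono1 : m • ((K + 1) • s + n • x)
              ≤ m • ((K + 1) • s' + ((K + 1) * d + n) • x) :=
            nsmul_le_nsmul_right (htel K) m
          have e1 : (m * (K + 1)) • s + ((K + 1) * d + n) • p + (m * n) • x
              = m • ((K + 1) • s + n • x) + ((K + 1) * d + n) • p := by
            rw [nsmul_add, ← mul_nsmul' s, ← mul_nsmul' x]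
            abel
          have e2 : m • ((K + 1) • s' + ((K + 1) * d + n) • x) + ((K + 1) * d + n) • p
              = (m * (K + 1)) • s' + ((K + 1) * d + n) • (p + m • x) := by
            rw [nsmul_add, nsmul_add, ← mul_nsmul' s', ← mul_nsmul' x, ← mul_nsmul' x,
              mul_comm m ((K + 1) * d + n)]
            abel
          have h1 : (m * (K + 1)) • s + ((K + 1) * d + n) • p
              ≤ (m * (K + 1)) • s' + ((K + 1) * d + n) • q := by
            calc (m * (K + 1)) • s + ((K + 1) * d + n) • p
                ≤ (m * (K + 1)) • s + ((K + 1) * d + n) • p + (m * n) • x :=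
                  le_add_of_nonneg_right (h0 _)
              _ = m • ((K + 1) • s + n • x) + ((K + 1) * d + n) • p := e1
              _ ≤ m • ((K + 1) • s' + ((K + 1) * d + n) • x) + ((K + 1) * d + n) • p :=
                  add_le_add hmono1 le_rfl
              _ = (m * (K + 1)) • s' + ((K + 1) * d + n) • (p + m • x) := e2
              _ ≤ (m * (K + 1)) • s' + ((K + 1) * d + n) • q :=
                  add_le_add le_rfl (nsmul_le_nsmul_right hpq _)
          have h2 := P.f_mono _ (P.add_mem (P.nsmul_mem hs _) (P.nsmul_mem hp _)) _
            (P.add_mem (P.nsmul_mem hs' _) (P.nsmul_mem hq _)) h1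
          rw [P.f_add _ (P.nsmul_mem hs _) _ (P.nsmul_mem hp _),
            P.f_add _ (P.nsmul_mem hs' _) _ (P.nsmul_mem hq _),
            P.f_nsmul hs, P.f_nsmul hp, P.f_nsmul hs', P.f_nsmul hq] at h2
          push_cast at h2 ⊢
          nlinarith [h2]
        have harch := arch hineq
        rw [div_le_div_iff₀ hd0 hm0]
        nlinarith [harch]
      have hge : (P.f s - P.f s') / d ≤ t := le_csInf hTne hlb
      rw [div_le_iff₀ hd0] at hge
      linarith
    · -- n = n'
      have := key0 s hs s' hs' n hrel
      linarith
    · -- n' < n : an upper-bound constraint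
      obtain ⟨d, hd1, rfl⟩ : ∃ d, 1 ≤ d ∧ n = n' + d := ⟨n - n', by omega, by omega⟩
      suffices h : P.f s + d * t ≤ P.f s' by push_cast; linarith
      have htel := tele_ge hrel
      have hstep : ∀ K : ℕ, ((K : ℝ) + 1) * (t * d - (P.f s' - P.f s))
          ≤ ((n' * N : ℕ) : ℝ) := by
        intro K
        have hm1 : 1 ≤ (K + 1) * d + n' :=
          le_add_right (Nat.one_le_iff_ne_zero.2 (Nat.mul_ne_zero (Nat.succ_ne_zero K)
            (by omega)))
        have hpure : (K + 1) • s + ((K + 1) * d + n') • x ≤ (K + 1) • s' + (n' * N) • b :=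
          (htel K).trans (add_le_add le_rfl (hxN n'))
        have hmem : t ≤ (P.f ((K + 1) • s' + (n' * N) • b) - P.f ((K + 1) • s))
            / (((K + 1) * d + n' : ℕ) : ℝ) :=
          csInf_le hTbdd ⟨(K + 1) • s, P.nsmul_mem hs _, _,
            P.add_mem (P.nsmul_mem hs' _) (P.nsmul_mem P.b_mem _),
            (K + 1) * d + n', hm1, hpure, rfl⟩
        have hcastpos : (0 : ℝ) < (((K + 1) * d + n' : ℕ) : ℝ) := by
          exact_mod_cast hm1
        rw [le_div_iff₀ hcastpos] at hmem
        rw [P.f_add _ (P.nsmul_mem hs' _) _ (P.nsmul_mem P.b_mem _), P.f_nsmul hs',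
          P.f_nsmul P.b_mem, P.f_nsmul hs, P.f_b] at hmem
        push_cast at hmem ⊢
        nlinarith [hmem, mul_nonneg ht0 (Nat.cast_nonneg n' : (0 : ℝ) ≤ (n' : ℝ))]
      have := arch hstep
      linarith
  -- build the extension
  refine ⟨⟨{y | ∃ s ∈ P.S, ∃ n : ℕ, y = s + n • x}, ⟨0, P.zero_mem, 0, by simp⟩,
    ?_, ?_, extFun P x t, ?_, ?_, ⟨b, P.b_mem, 0, by simp⟩, ?_⟩, ?_, ⟨0, P.zero_mem, 1, by simp⟩,
    ?_⟩
  · rintro y z ⟨s, hs, n, rfl⟩ ⟨s', hs', n', rfl⟩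
    exact ⟨s + s', P.add_mem hs hs', n + n', by rw [add_nsmul]; abel⟩
  · rintro y ⟨s, hs, n, rfl⟩
    obtain ⟨Ns, hNs⟩ := P.bdd s hs
    refine ⟨Ns + n * N, ?_⟩
    calc s + n • x ≤ Ns • b + n • x := add_le_add hNs le_rfl
      _ ≤ Ns • b + (n * N) • b := add_le_add le_rfl (hxN n)
      _ = (Ns + n * N) • b := (add_nsmul b Ns (n * N)).symm
  · rintro y ⟨s, hs, n, rfl⟩ z ⟨s', hs', n', rfl⟩
    have he : (s + n • x) + (s' + n' • x) = (s + s') + (n + n') • x := by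
      rw [add_nsmul]; abel
    rw [he, extFun_eq P key (P.add_mem hs hs') (n + n'), extFun_eq P key hs n,
      extFun_eq P key hs' n', P.f_add s hs s' hs']
    push_cast; ring
  · rintro y ⟨s, hs, n, rfl⟩ z ⟨s', hs', n', rfl⟩ hyz
    rw [extFun_eq P key hs n, extFun_eq P key hs' n']
    exact key s hs s' hs' n n' hyz
  · have hb := extFun_eq P key P.b_mem 0
    simp only [zero_nsmul, add_zero, Nat.cast_zero, zero_mul] at hb
    rw [hb, P.f_b]
  · refine ⟨fun s hs => ⟨s, hs, 0, by simp⟩, fun y hy => ?_⟩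
    have := extFun_eq P key hy 0
    simpa using this
  · show extFun P x t x = t
    have hx := extFun_eq P key P.zero_mem 1
    simp only [one_nsmul, zero_add, Nat.cast_one, one_mul] at hx
    rw [hx, P.f_zero, zero_add]


/-- Chains of partial states have upper bounds. -/
lemma chain_ub (c : Set (PS M b)) (hc : IsChain (· ≤ ·) c) (p₀ : PS M b) (hp₀ : p₀ ∈ c) :
    ∃ ub : PS M b, ∀ z ∈ c, z ≤ ub := by
  classical
  have common : ∀ {y z : M}, (∃ p ∈ c, y ∈ p.S) → (∃ p ∈ c, z ∈ p.S) →
      ∃ r ∈ c, y ∈ r.S ∧ z ∈ r.S := by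
    rintro y z ⟨p, hp, hy⟩ ⟨q, hq, hz⟩
    rcases eq_or_ne p q with rfl | hne
    · exact ⟨p, hp, hy, hz⟩
    rcases hc hp hq hne with h | h
    · exact ⟨q, hq, h.1 hy, hz⟩
    · exact ⟨p, hp, hy, h.1 hz⟩
  set uf : M → ℝ := fun y => if h : ∃ p ∈ c, y ∈ p.S then h.choose.f y else 0 with huf
  have huf_eq : ∀ p ∈ c, ∀ y ∈ p.S, uf y = p.f y := by
    intro p hp y hy
    have hy' : ∃ p ∈ c, y ∈ p.S := ⟨p, hp, hy⟩
    rw [huf]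
    simp only [dif_pos hy']
    obtain ⟨hq, hyq⟩ := hy'.choose_spec
    rcases eq_or_ne hy'.choose p with heq | hne
    · rw [heq]
    rcases hc hq hp hne with hqp | hpq
    · exact (hqp.2 y hyq).symm
    · exact hpq.2 y hy
  refine ⟨⟨{y | ∃ p ∈ c, y ∈ p.S}, ⟨p₀, hp₀, p₀.zero_mem⟩, ?_, ?_, uf, ?_, ?_,
    ⟨p₀, hp₀, p₀.b_mem⟩, ?_⟩, ?_⟩
  · intro y z hy hz
    obtain ⟨r, hr, hyr, hzr⟩ := common hy hz
    exact ⟨r, hr, r.add_mem hyr hzr⟩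
  · rintro y ⟨p, hp, hyp⟩
    exact p.bdd y hyp
  · intro y hy z hz
    obtain ⟨r, hr, hyr, hzr⟩ := common hy hz
    rw [huf_eq r hr _ (r.add_mem hyr hzr), huf_eq r hr y hyr, huf_eq r hr z hzr]
    exact r.f_add y hyr z hzr
  · intro y hy z hz hyz
    obtain ⟨r, hr, hyr, hzr⟩ := common hy hz
    rw [huf_eq r hr y hyr, huf_eq r hr z hzr]
    exact r.f_mono y hyr z hzr hyz
  · show uf b = 1
    rw [huf_eq p₀ hp₀ b p₀.b_mem, p₀.f_b]
  · intro z hz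
    exact ⟨fun y hy => ⟨z, hz, hy⟩, fun y hy => huf_eq z hz y hy⟩

/-- The base partial state, defined on the multiples of `b`, extended to include `a`
with value at least 1. -/
lemma base (h0 : ∀ x : M, 0 ≤ x) {a : M} {n₀ : ℕ}
    (h1 : ∀ k : ℕ, ¬((k + 1) • a ≤ k • b)) (habn : a ≤ n₀ • b) :
    ∃ P : PS M b, a ∈ P.S ∧ 1 ≤ P.f a := by
  classical
  -- multiples of b are strictly ordered by their coefficients
  have bmono : ∀ n m : ℕ, n • b ≤ m • b → n ≤ m := by
    intro n m hnm
    by_contra hlt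
    push_neg at hlt
    obtain ⟨d, hd1, rfl⟩ : ∃ d, 1 ≤ d ∧ n = m + d := ⟨n - m, by omega, by omega⟩
    have hrel : (0 : M) + (m + d) • b ≤ 0 + m • b := by simpa using hnm
    have htel := tele_ge hrel
    set K := (m + 1) * n₀ with hK
    have h2 : ((K + 1) * d + m) • b ≤ m • b := by simpa using htel K
    have h3 : (m + 1) • a ≤ m • b := by
      calc (m + 1) • a ≤ (m + 1) • (n₀ • b) := nsmul_le_nsmul_right habn (m + 1)
        _ = ((m + 1) * n₀) • b := (mul_nsmul' b (m + 1) n₀).symm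
        _ ≤ ((K + 1) * d + m) • b := nsmul_le_nsmul_left (h0 b)
            (le_trans (Nat.le_succ K) (le_trans (Nat.le_mul_of_pos_right (K + 1) hd1)
              (Nat.le_add_right _ m)))
        _ ≤ m • b := h2
    exact h1 m h3
  -- the function on multiples of b
  set f₀ : M → ℝ := fun y => if h : ∃ n : ℕ, y = n • b then (h.choose : ℝ) else 0 with hf₀
  have hw : ∀ n : ℕ, f₀ (n • b) = (n : ℝ) := by
    intro n
    have hy : ∃ k : ℕ, n • b = k • b := ⟨n, rfl⟩
    rw [hf₀]
    simp only [dif_pos hy]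
    have he : n • b = hy.choose • b := hy.choose_spec
    have h1' := bmono n hy.choose (le_of_eq he)
    have h2' := bmono hy.choose n (le_of_eq he.symm)
    have : hy.choose = n := le_antisymm h2' h1'
    rw [this]
  set P₀ : PS M b := ⟨{y | ∃ n : ℕ, y = n • b}, ⟨0, (zero_nsmul b).symm⟩,
    fun {y z} hy hz => by
      obtain ⟨n, rfl⟩ := hy; obtain ⟨m, rfl⟩ := hz
      exact ⟨n + m, (add_nsmul b n m).symm⟩,
    fun y hy => by obtain ⟨n, rfl⟩ := hy; exact ⟨n, le_rfl⟩,
    f₀,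
    fun y hy z hz => by
      obtain ⟨n, rfl⟩ := hy; obtain ⟨m, rfl⟩ := hz
      rw [← add_nsmul, hw, hw, hw]; push_cast; ring,
    fun y hy z hz hyz => by
      obtain ⟨n, rfl⟩ := hy; obtain ⟨m, rfl⟩ := hz
      rw [hw, hw]
      exact_mod_cast bmono n m hyz,
    ⟨1, (one_nsmul b).symm⟩,
    by rw [show b = (1 : ℕ) • b from (one_nsmul b).symm, hw]; norm_num⟩ with hP₀
  obtain ⟨Q, hPQ, haQ, hfa⟩ := extend h0 P₀ a habn
  refine ⟨Q, haQ, ?_⟩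
  rw [hfa]
  refine le_csInf (T_nonempty P₀ habn) ?_
  rintro r ⟨p, hp, q, hq, m, hm, hrel, rfl⟩
  obtain ⟨pn, rfl⟩ := hp
  obtain ⟨qn, rfl⟩ := hq
  -- the crucial arithmetic fact : pn + m ≤ qn
  have hnat : pn + m ≤ qn := by
    by_contra hcon
    push_neg at hcon
    rcases le_total pn qn with hle | hle
    · obtain ⟨d, rfl⟩ : ∃ d, qn = pn + d := ⟨qn - pn, by omega⟩
      have hd : d < m := by omega
      have hrel' : m • a + pn • b ≤ 0 + (pn + d) • b := by
        rw [zero_add, add_comm (m • a)]; exact hrel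
      have htel := tele_le hrel'
      have h4 : ((pn + 1) * m) • a ≤ ((pn + 1) * d + pn) • b := by
        calc ((pn + 1) * m) • a = (pn + 1) • (m • a) := mul_nsmul' a (pn + 1) m
          _ ≤ (pn + 1) • (m • a) + pn • b := le_add_of_nonneg_right (h0 _)
          _ ≤ (pn + 1) • (0 : M) + ((pn + 1) * d + pn) • b := htel pn
          _ = ((pn + 1) * d + pn) • b := by rw [smul_zero, zero_add]
      have h5 : ((pn + 1) * d + pn) + 1 ≤ (pn + 1) * m := by
        have := Nat.mul_le_mul_left (pn + 1) (show d + 1 ≤ m by omega)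
        calc ((pn + 1) * d + pn) + 1 = (pn + 1) * (d + 1) := by ring
          _ ≤ (pn + 1) * m := this
      exact h1 ((pn + 1) * d + pn) ((nsmul_le_nsmul_left (h0 a) h5).trans h4)
    · obtain ⟨d, rfl⟩ : ∃ d, pn = qn + d := ⟨pn - qn, by omega⟩
      have hrel' : m • a + (qn + d) • b ≤ 0 + qn • b := by
        rw [zero_add, add_comm (m • a)]; exact hrel
      have htel := tele_ge hrel'
      have h4 : ((qn + 1) * m) • a ≤ qn • b := by
        calc ((qn + 1) * m) • a = (qn + 1) • (m • a) := mul_nsmul' a (qn + 1) m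
          _ ≤ (qn + 1) • (m • a) + ((qn + 1) * d + qn) • b :=
              le_add_of_nonneg_right (h0 _)
          _ ≤ (qn + 1) • (0 : M) + qn • b := htel qn
          _ = qn • b := by rw [smul_zero, zero_add]
      have h5 : qn + 1 ≤ (qn + 1) * m := Nat.le_mul_of_pos_right (qn + 1) (by omega)
      exact h1 qn ((nsmul_le_nsmul_left (h0 a) h5).trans h4)
  have hm0 : (0 : ℝ) < (m : ℝ) := by exact_mod_cast hm
  show (1 : ℝ) ≤ (f₀ (qn • b) - f₀ (pn • b)) / ↑m
  rw [hw, hw, le_div_iff₀ hm0]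
  have : (pn : ℝ) + (m : ℝ) ≤ (qn : ℝ) := by exact_mod_cast hnat
  linarith


/-- Statement (5) implies statement (1). -/
lemma main51 (h0 : ∀ x : M, 0 ≤ x) {a : M}
    (hab : ∃ n : ℕ, a ≤ n • b)
    (hst : ∀ f : M → ℝ≥0∞, f 0 = 0 → (∀ x y : M, f (x + y) = f x + f y) →
      (∀ x y : M, x ≤ y → f x ≤ f y) → f b = 1 → f a < 1) :
    ∃ k : ℕ, (k + 1) • a ≤ k • b := by
  classical
  by_contra h1
  push_neg at h1
  obtain ⟨n₀, habn⟩ := hab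
  obtain ⟨P₁, haP, hfa⟩ := base h0 h1 habn
  obtain ⟨Pm, hP₁m, hmax⟩ := zorn_le_nonempty_Ici₀ P₁
    (fun c hcsub hchain y hy => chain_ub c hchain y hy) P₁ le_rfl
  have hfull : ∀ y : M, (∃ n : ℕ, y ≤ n • b) → y ∈ Pm.S := by
    rintro y ⟨n, hn⟩
    obtain ⟨Q, hPQ, hyQ, -⟩ := extend h0 Pm y hn
    exact (hmax hPQ).1 hyQ
  set F : M → ℝ≥0∞ := fun y =>
    if ∃ n : ℕ, y ≤ n • b then ENNReal.ofReal (Pm.f y) else ⊤ with hF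
  have hF0 : F 0 = 0 := by
    simp only [hF]
    have h0' : ∃ n : ℕ, (0 : M) ≤ n • b := ⟨0, le_of_eq (zero_nsmul b).symm⟩
    rw [if_pos h0', Pm.f_zero, ENNReal.ofReal_zero]
  have hFadd : ∀ x y : M, F (x + y) = F x + F y := by
    intro x y
    by_cases hx : ∃ n : ℕ, x ≤ n • b
    · by_cases hy : ∃ n : ℕ, y ≤ n • b
      · obtain ⟨nx, hnx⟩ := hx
        obtain ⟨ny, hny⟩ := hy
        have hxy : ∃ n : ℕ, x + y ≤ n • b :=
          ⟨nx + ny, by rw [add_nsmul]; exact add_le_add hnx hny⟩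
        have hx' : ∃ n : ℕ, x ≤ n • b := ⟨nx, hnx⟩
        have hy' : ∃ n : ℕ, y ≤ n • b := ⟨ny, hny⟩
        simp only [hF]
        rw [if_pos hxy, if_pos hx', if_pos hy',
          Pm.f_add x (hfull x hx') y (hfull y hy'),
          ENNReal.ofReal_add (Pm.f_nonneg h0 (hfull x hx'))
            (Pm.f_nonneg h0 (hfull y hy'))]
      · have hxy : ¬∃ n : ℕ, x + y ≤ n • b := by
          rintro ⟨n, hn⟩
          exact hy ⟨n, (le_add_of_nonneg_left (h0 x)).trans hn⟩
        simp only [hF]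
        rw [if_neg hxy, if_neg hy, add_top]
    · have hxy : ¬∃ n : ℕ, x + y ≤ n • b := by
        rintro ⟨n, hn⟩
        exact hx ⟨n, (le_add_of_nonneg_right (h0 y)).trans hn⟩
      simp only [hF]
      rw [if_neg hxy, if_neg hx, top_add]
  have hFmono : ∀ x y : M, x ≤ y → F x ≤ F y := by
    intro x y hxy
    by_cases hy : ∃ n : ℕ, y ≤ n • b
    · obtain ⟨n, hn⟩ := hy
      have hx : ∃ n : ℕ, x ≤ n • b := ⟨n, hxy.trans hn⟩
      have hy' : ∃ n : ℕ, y ≤ n • b := ⟨n, hn⟩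
      simp only [hF]
      rw [if_pos hx, if_pos hy']
      exact ENNReal.ofReal_le_ofReal (Pm.f_mono x (hfull x hx) y (hfull y hy') hxy)
    · simp only [hF]
      rw [if_neg hy]
      exact le_top
  have hFb : F b = 1 := by
    simp only [hF]
    have hb' : ∃ n : ℕ, b ≤ n • b := ⟨1, le_of_eq (one_nsmul b).symm⟩
    rw [if_pos hb', Pm.f_b, ENNReal.ofReal_one]
  have hFa : (1 : ℝ≥0∞) ≤ F a := by
    simp only [hF]
    have ha' : ∃ n : ℕ, a ≤ n • b := ⟨n₀, habn⟩
    rw [if_pos ha']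
    have heq : Pm.f a = P₁.f a := hP₁m.2 a haP
    rw [heq, ← ENNReal.ofReal_one]
    exact ENNReal.ofReal_le_ofReal hfa
  exact absurd (hst F hF0 hFadd hFmono hFb) (not_lt.2 hFa)

end Stmt0Aux

/-- Let `M` be a positively ordered monoid (an ordered
commutative monoid in which `0` is the least element) and `a b : M`.
The following are equivalent:
(1) `(k+1)•a ≤ k•b` for some `k`;
(2) `(k+1)•a ≤ k•b` for all sufficiently large `k`;
(3) for every `n ≥ 1` there is `k` with `(k+n)•a ≤ k•b`;
(4) for every `n ≥ 1`, `(k+n)•a ≤ k•b` for all sufficiently large `k`;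
(5) `a ≤ n•b` for some `n`, and `f a < 1` for every extended state `f` on `M`
normalized at `b`. -/
theorem stmt0 {M : Type*} [AddCommMonoid M] [PartialOrder M] [IsOrderedAddMonoid M] (h0 : ∀ x : M, 0 ≤ x) (a b : M) :
    List.TFAE
      [ (∃ k : ℕ, (k + 1) • a ≤ k • b),
        (∃ k₀ : ℕ, ∀ k : ℕ, k₀ ≤ k → (k + 1) • a ≤ k • b),
        (∀ n : ℕ, 1 ≤ n → ∃ k : ℕ, (k + n) • a ≤ k • b),
        (∀ n : ℕ, 1 ≤ n → ∃ k₀ : ℕ, ∀ k : ℕ, k₀ ≤ k → (k + n) • a ≤ k • b),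
        ((∃ n : ℕ, a ≤ n • b) ∧
          ∀ f : M → ℝ≥0∞, f 0 = 0 → (∀ x y : M, f (x + y) = f x + f y) →
            (∀ x y : M, x ≤ y → f x ≤ f y) → f b = 1 → f a < 1) ] := by
  tfae_have 1 → 4 := by
    rintro ⟨k, hk⟩ n hn
    refine ⟨k * (k + n), fun j hj => ?_⟩
    rcases Nat.eq_zero_or_pos k with rfl | hkpos
    · have ha0 : a ≤ 0 := by simpa using hk
      calc (j + n) • a ≤ (j + n) • (0 : M) := nsmul_le_nsmul_right ha0 _
        _ = 0 := smul_zero _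
        _ ≤ j • b := h0 _
    · set m := j / k with hm
      have hmk : m * k + j % k = j := by
        rw [hm, mul_comm]; exact Nat.div_add_mod j k
      have hmod : j % k < k := Nat.mod_lt _ hkpos
      have hmge : k + n ≤ m := by
        rw [hm, Nat.le_div_iff_mul_le hkpos]
        exact hj.trans_eq' (by ring)
      have hjn : j + n ≤ m * (k + 1) := by
        have : m * (k + 1) = m * k + m := by ring
        omega
      have hmkj : m * k ≤ j := by omega
      calc (j + n) • a ≤ (m * (k + 1)) • a := nsmul_le_nsmul_left (h0 a) hjn
        _ = m • ((k + 1) • a) := mul_nsmul' a m (k + 1)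
        _ ≤ m • (k • b) := nsmul_le_nsmul_right hk m
        _ = (m * k) • b := (mul_nsmul' b m k).symm
        _ ≤ j • b := nsmul_le_nsmul_left (h0 b) hmkj
  tfae_have 4 → 2 := fun h => h 1 le_rfl
  tfae_have 2 → 1 := fun ⟨k₀, hk⟩ => ⟨k₀, hk k₀ le_rfl⟩
  tfae_have 4 → 3 := fun h n hn => (h n hn).imp fun k₀ hk => hk k₀ le_rfl
  tfae_have 3 → 1 := fun h => h 1 le_rfl
  tfae_have 1 → 5 := by
    rintro ⟨k, hk⟩
    constructor
    · exact ⟨k, le_trans (by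
        calc a = 1 • a := (one_nsmul a).symm
          _ ≤ (k + 1) • a := nsmul_le_nsmul_left (h0 a) (by omega)) hk⟩
    · intro f hf0 hfadd hfmono hfb
      have hsmul : ∀ (x : M) (n : ℕ), f (n • x) = n * f x := by
        intro x n
        induction n with
        | zero => simpa using hf0
        | succ n ih =>
            rw [succ_nsmul, hfadd, ih]
            push_cast
            ring
      have h1 : ((k : ℝ≥0∞) + 1) * f a ≤ (k : ℝ≥0∞) := by
        have := hfmono _ _ hk
        rw [hsmul, hsmul, hfb, mul_one] at this
        simpa [add_comm] using this
      by_contra hfa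
      push_neg at hfa
      have h2 : (k : ℝ≥0∞) + 1 ≤ ((k : ℝ≥0∞) + 1) * f a := by
        calc (k : ℝ≥0∞) + 1 = ((k : ℝ≥0∞) + 1) * 1 := (mul_one _).symm
          _ ≤ ((k : ℝ≥0∞) + 1) * f a := by gcongr
      exact absurd (h2.trans h1)
        (not_le.2 (ENNReal.lt_add_right (ENNReal.natCast_ne_top k) one_ne_zero))
  tfae_have 5 → 1 := by
    rintro ⟨hab, hst⟩
    exact Stmt0Aux.main51 h0 hab hst
  tfae_finish
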